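/- Let W be a finite-dimensional real inner product space, and let Σ be a finite set of vectors in W. For parameters δ = (δ₁, δ₂) ∈ ℝ², define ℓ_δ(w) = ⟨v₀, w⟩ + δ₁·min_{u∈Σ₁}⟨u,w⟩ + δ₂·min_{u∈Σ₂}⟨u,w⟩ where v₀ ∈ W is fixed and Σ₁, Σ₂ ⊆ Σ are fixed nonempty finite subsets. Let w*_δ be the unique maximizer of ℓ_δ(w) − ½‖w‖² over W. Then there exists a constant c > 0 (depending only on Σ) such that for all δ, γ ∈ ℝ²_{≥0}, one has ‖w*_δ − w*_γ‖ ≤ c·|δ − γ|₁, where |·|₁ is the L¹ norm on ℝ². -/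
import Mathlib


open RealInnerProductSpace

/-- Lipschitz bound for the min of inner products. -/
lemma inf'_inner_lip {W : Type*} [NormedAddCommGroup W] [InnerProductSpace ℝ W]
    (T : Finset W) (h : T.Nonempty) (M : ℝ) (hM : ∀ u ∈ T, ‖u‖ ≤ M) (a b : W) :
    T.inf' h (fun u => ⟪u, a⟫) ≤ T.inf' h (fun u => ⟪u, b⟫) + M * ‖a - b‖ := by
  obtain ⟨u, hu, heq⟩ := T.exists_mem_eq_inf' h (fun u => ⟪u, b⟫)
  have h1 : T.inf' h (fun u => ⟪u, a⟫) ≤ ⟪u, a⟫ := Finset.inf'_le _ hu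
  have h2 : ⟪u, a⟫ = ⟪u, b⟫ + ⟪u, a - b⟫ := by rw [inner_sub_right]; ring
  have h3 : ⟪u, a - b⟫ ≤ ‖u‖ * ‖a - b‖ := real_inner_le_norm u (a - b)
  have h4 : ‖u‖ * ‖a - b‖ ≤ M * ‖a - b‖ :=
    mul_le_mul_of_nonneg_right (hM u hu) (norm_nonneg _)
  rw [heq]
  linarith

/-- Midpoint concavity for the min of inner products. -/
lemma inf'_inner_mid {W : Type*} [NormedAddCommGroup W] [InnerProductSpace ℝ W]
    (T : Finset W) (h : T.Nonempty) (a b : W) :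
    (1/2) * T.inf' h (fun u => ⟪u, a⟫) + (1/2) * T.inf' h (fun u => ⟪u, b⟫)
      ≤ T.inf' h (fun u => ⟪u, (1/2 : ℝ) • (a + b)⟫) := by
  apply Finset.le_inf'
  intro u hu
  have ha : T.inf' h (fun u => ⟪u, a⟫) ≤ ⟪u, a⟫ := Finset.inf'_le _ hu
  have hb : T.inf' h (fun u => ⟪u, b⟫) ≤ ⟪u, b⟫ := Finset.inf'_le _ hu
  have : ⟪u, (1/2 : ℝ) • (a + b)⟫ = (1/2) * (⟪u, a⟫ + ⟪u, b⟫) := by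
    rw [real_inner_smul_right, inner_add_right]
  rw [this]
  linarith

set_option maxHeartbeats 1000000 in
theorem stmt6 {W : Type*} [NormedAddCommGroup W] [InnerProductSpace ℝ W]
    [FiniteDimensional ℝ W] (S : Finset W) :
    ∃ c : ℝ, 0 < c ∧
      ∀ (v₀ : W) (S₁ S₂ : Finset W) (h₁ : S₁.Nonempty) (h₂ : S₂.Nonempty),
        S₁ ⊆ S → S₂ ⊆ S →
        ∀ wstar : ℝ × ℝ → W,
          (∀ δ : ℝ × ℝ, 0 ≤ δ.1 → 0 ≤ δ.2 →
            (∀ w : W,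
              (⟪v₀, w⟫ + δ.1 * S₁.inf' h₁ (fun u => ⟪u, w⟫)
                  + δ.2 * S₂.inf' h₂ (fun u => ⟪u, w⟫)) - (1 / 2) * ‖w‖ ^ 2 ≤
              (⟪v₀, wstar δ⟫ + δ.1 * S₁.inf' h₁ (fun u => ⟪u, wstar δ⟫)
                  + δ.2 * S₂.inf' h₂ (fun u => ⟪u, wstar δ⟫))
                - (1 / 2) * ‖wstar δ‖ ^ 2)) →
          ∀ δ γ : ℝ × ℝ, 0 ≤ δ.1 → 0 ≤ δ.2 → 0 ≤ γ.1 → 0 ≤ γ.2 →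
            ‖wstar δ - wstar γ‖ ≤ c * (|δ.1 - γ.1| + |δ.2 - γ.2|) := by
  set M : ℝ := ((S.sup fun u => ‖u‖₊ : NNReal) : ℝ) with hMdef
  have hM0 : 0 ≤ M := NNReal.coe_nonneg _
  have hMS : ∀ u ∈ S, ‖u‖ ≤ M := by
    intro u hu
    have : ‖u‖₊ ≤ S.sup fun u => ‖u‖₊ := Finset.le_sup hu
    exact_mod_cast this
  refine ⟨2 * M + 1, by linarith, ?_⟩
  intro v₀ S₁ S₂ h₁ h₂ hS₁ hS₂ wstar hopt δ γ hδ1 hδ2 hγ1 hγ2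
  set a := wstar δ with ha
  set b := wstar γ with hb
  set m : W := (1/2 : ℝ) • (a + b) with hm
  have hMS₁ : ∀ u ∈ S₁, ‖u‖ ≤ M := fun u hu => hMS u (hS₁ hu)
  have hMS₂ : ∀ u ∈ S₂, ‖u‖ ≤ M := fun u hu => hMS u (hS₂ hu)
  -- norm identity
  have hnorm : ‖m‖ ^ 2 = (1/2) * ‖a‖ ^ 2 + (1/2) * ‖b‖ ^ 2 - (1/4) * ‖a - b‖ ^ 2 := by
    have h1 : ‖a + b‖ ^ 2 = ‖a‖ ^ 2 + 2 * ⟪a, b⟫ + ‖b‖ ^ 2 := norm_add_sq_real a b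
    have h2 : ‖a - b‖ ^ 2 = ‖a‖ ^ 2 - 2 * ⟪a, b⟫ + ‖b‖ ^ 2 := norm_sub_sq_real a b
    have h3 : ‖m‖ = (1/2) * ‖a + b‖ := by
      rw [hm, norm_smul]; simp
    rw [h3]; nlinarith [h1, h2]
  have hv0 : ⟪v₀, m⟫ = (1/2) * ⟪v₀, a⟫ + (1/2) * ⟪v₀, b⟫ := by
    rw [hm, real_inner_smul_right, inner_add_right]; ring
  -- abbreviations as plain reals
  set A1 : ℝ := S₁.inf' h₁ (fun u => ⟪u, a⟫) with hA1
  set B1 : ℝ := S₁.inf' h₁ (fun u => ⟪u, b⟫) with hB1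
  set M1 : ℝ := S₁.inf' h₁ (fun u => ⟪u, m⟫) with hM1
  set A2 : ℝ := S₂.inf' h₂ (fun u => ⟪u, a⟫) with hA2
  set B2 : ℝ := S₂.inf' h₂ (fun u => ⟪u, b⟫) with hB2
  set M2 : ℝ := S₂.inf' h₂ (fun u => ⟪u, m⟫) with hM2
  -- midpoint concavity of the infs
  have hc1 : (1/2) * A1 + (1/2) * B1 ≤ M1 := inf'_inner_mid S₁ h₁ a b
  have hc2 : (1/2) * A2 + (1/2) * B2 ≤ M2 := inf'_inner_mid S₂ h₂ a b
  -- optimality at δ and γ applied to m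
  have hoδ : (⟪v₀, m⟫ + δ.1 * M1 + δ.2 * M2) - (1/2) * ‖m‖ ^ 2 ≤
      (⟪v₀, a⟫ + δ.1 * A1 + δ.2 * A2) - (1/2) * ‖a‖ ^ 2 := hopt δ hδ1 hδ2 m
  have hoγ : (⟪v₀, m⟫ + γ.1 * M1 + γ.2 * M2) - (1/2) * ‖m‖ ^ 2 ≤
      (⟪v₀, b⟫ + γ.1 * B1 + γ.2 * B2) - (1/2) * ‖b‖ ^ 2 := hopt γ hγ1 hγ2 m
  -- multiply concavity by nonneg coefficients, in expanded form
  have e1δ : (1/2) * (δ.1 * A1) + (1/2) * (δ.1 * B1) ≤ δ.1 * M1 := by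
    calc (1/2) * (δ.1 * A1) + (1/2) * (δ.1 * B1) = δ.1 * ((1/2) * A1 + (1/2) * B1) := by ring
      _ ≤ δ.1 * M1 := mul_le_mul_of_nonneg_left hc1 hδ1
  have e2δ : (1/2) * (δ.2 * A2) + (1/2) * (δ.2 * B2) ≤ δ.2 * M2 := by
    calc (1/2) * (δ.2 * A2) + (1/2) * (δ.2 * B2) = δ.2 * ((1/2) * A2 + (1/2) * B2) := by ring
      _ ≤ δ.2 * M2 := mul_le_mul_of_nonneg_left hc2 hδ2
  have e1γ : (1/2) * (γ.1 * A1) + (1/2) * (γ.1 * B1) ≤ γ.1 * M1 := by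
    calc (1/2) * (γ.1 * A1) + (1/2) * (γ.1 * B1) = γ.1 * ((1/2) * A1 + (1/2) * B1) := by ring
      _ ≤ γ.1 * M1 := mul_le_mul_of_nonneg_left hc1 hγ1
  have e2γ : (1/2) * (γ.2 * A2) + (1/2) * (γ.2 * B2) ≤ γ.2 * M2 := by
    calc (1/2) * (γ.2 * A2) + (1/2) * (γ.2 * B2) = γ.2 * ((1/2) * A2 + (1/2) * B2) := by ring
      _ ≤ γ.2 * M2 := mul_le_mul_of_nonneg_left hc2 hγ2
  -- strong concavity consequences
  have key1 : (1/8) * ‖a - b‖ ^ 2 ≤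
      (1/2) * (δ.1 * A1 + δ.2 * A2) - (1/2) * (δ.1 * B1 + δ.2 * B2)
        + (1/2) * ⟪v₀, a⟫ - (1/2) * ⟪v₀, b⟫ - (1/4) * ‖a‖ ^ 2 + (1/4) * ‖b‖ ^ 2 := by
    linarith [hoδ, e1δ, e2δ, hnorm, hv0]
  have key2 : (1/8) * ‖a - b‖ ^ 2 ≤
      (1/2) * (γ.1 * B1 + γ.2 * B2) - (1/2) * (γ.1 * A1 + γ.2 * A2)
        + (1/2) * ⟪v₀, b⟫ - (1/2) * ⟪v₀, a⟫ - (1/4) * ‖b‖ ^ 2 + (1/4) * ‖a‖ ^ 2 := by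
    linarith [hoγ, e1γ, e2γ, hnorm, hv0]
  -- combine
  have key : (1/2) * ‖a - b‖ ^ 2 ≤
      (δ.1 - γ.1) * (A1 - B1) + (δ.2 - γ.2) * (A2 - B2) := by
    have hsum := add_le_add key1 key2
    calc (1/2) * ‖a - b‖ ^ 2
        = 2 * ((1/8) * ‖a - b‖ ^ 2 + (1/8) * ‖a - b‖ ^ 2) := by ring
      _ ≤ 2 * (((1/2) * (δ.1 * A1 + δ.2 * A2) - (1/2) * (δ.1 * B1 + δ.2 * B2)
            + (1/2) * ⟪v₀, a⟫ - (1/2) * ⟪v₀, b⟫ - (1/4) * ‖a‖ ^ 2 + (1/4) * ‖b‖ ^ 2)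
          + ((1/2) * (γ.1 * B1 + γ.2 * B2) - (1/2) * (γ.1 * A1 + γ.2 * A2)
            + (1/2) * ⟪v₀, b⟫ - (1/2) * ⟪v₀, a⟫ - (1/4) * ‖b‖ ^ 2 + (1/4) * ‖a‖ ^ 2)) := by
          linarith [hsum]
      _ = (δ.1 - γ.1) * (A1 - B1) + (δ.2 - γ.2) * (A2 - B2) := by ring
  -- Lipschitz bounds on the infs
  have l1a : A1 ≤ B1 + M * ‖a - b‖ := inf'_inner_lip S₁ h₁ M hMS₁ a b
  have l1b : B1 ≤ A1 + M * ‖b - a‖ := inf'_inner_lip S₁ h₁ M hMS₁ b a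
  have l2a : A2 ≤ B2 + M * ‖a - b‖ := inf'_inner_lip S₂ h₂ M hMS₂ a b
  have l2b : B2 ≤ A2 + M * ‖b - a‖ := inf'_inner_lip S₂ h₂ M hMS₂ b a
  have hsymm : ‖b - a‖ = ‖a - b‖ := norm_sub_rev b a
  rw [hsymm] at l1b l2b
  have habs1 : |A1 - B1| ≤ M * ‖a - b‖ := abs_le.mpr ⟨by linarith, by linarith⟩
  have habs2 : |A2 - B2| ≤ M * ‖a - b‖ := abs_le.mpr ⟨by linarith, by linarith⟩
  set L : ℝ := |δ.1 - γ.1| + |δ.2 - γ.2| with hL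
  have hL0 : 0 ≤ L := by positivity
  have hbound : (1/2) * ‖a - b‖ ^ 2 ≤ M * ‖a - b‖ * L := by
    have b1 : (δ.1 - γ.1) * (A1 - B1) ≤ |δ.1 - γ.1| * (M * ‖a - b‖) := by
      calc (δ.1 - γ.1) * (A1 - B1) ≤ |(δ.1 - γ.1) * (A1 - B1)| := le_abs_self _
        _ = |δ.1 - γ.1| * |A1 - B1| := abs_mul _ _
        _ ≤ |δ.1 - γ.1| * (M * ‖a - b‖) :=
            mul_le_mul_of_nonneg_left habs1 (abs_nonneg _)
    have b2 : (δ.2 - γ.2) * (A2 - B2) ≤ |δ.2 - γ.2| * (M * ‖a - b‖) := by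
      calc (δ.2 - γ.2) * (A2 - B2) ≤ |(δ.2 - γ.2) * (A2 - B2)| := le_abs_self _
        _ = |δ.2 - γ.2| * |A2 - B2| := abs_mul _ _
        _ ≤ |δ.2 - γ.2| * (M * ‖a - b‖) :=
            mul_le_mul_of_nonneg_left habs2 (abs_nonneg _)
    calc (1/2) * ‖a - b‖ ^ 2 ≤ (δ.1 - γ.1) * (A1 - B1) + (δ.2 - γ.2) * (A2 - B2) := key
      _ ≤ |δ.1 - γ.1| * (M * ‖a - b‖) + |δ.2 - γ.2| * (M * ‖a - b‖) := by linarith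
      _ = M * ‖a - b‖ * L := by rw [hL]; ring
  -- conclude
  rcases eq_or_lt_of_le (norm_nonneg (a - b)) with h0 | h0
  · rw [← h0]; positivity
  · have h2ML : ‖a - b‖ ≤ 2 * M * L := by nlinarith [hbound]
    calc ‖a - b‖ ≤ 2 * M * L := h2ML
      _ ≤ (2 * M + 1) * L := by nlinarith [hL0]
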